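/- There is no positive integer t with 2^t ≡ −1 (mod 15); consequently, with the classical involution, F₂(C₃ × C₁₅) is not *-clean. -/

import Mathlib

noncomputable section

abbrev Rq : Type := AdjoinRoot ((Polynomial.X : Polynomial (ZMod 2))^4 + Polynomial.X + 1)

abbrev β : Rq := AdjoinRoot.root _

lemma h2 : (2 : Rq) = 0 := by
  have h := map_ofNat (algebraMap (ZMod 2) Rq) 2
  rw [← h, show (2 : ZMod 2) = 0 from rfl, map_zero]

lemma h0 : β^4 + β + 1 = 0 := by
  have := AdjoinRoot.eval₂_root ((Polynomial.X : Polynomial (ZMod 2))^4 + Polynomial.X + 1)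
  simpa using this

lemma hb15 : β^15 = 1 := by
  linear_combination (β^11+β^8+β^7+β^5+β^3+β^2+β+1) * h0 - (β^12+β^11+β^9+β^8+β^7+β^6+β^5+β^4+β^3+β^2+β+1) * h2

lemma hRnt : Nontrivial Rq := by
  apply AdjoinRoot.nontrivial
  have : ((Polynomial.X : Polynomial (ZMod 2))^4 + Polynomial.X + 1).degree = 4 := by
    compute_degree!
  simp [this]

lemma hpow_mod (n : ℕ) : β ^ (n % 15) = β ^ n := by
  conv_rhs => rw [← Nat.div_add_mod n 15]
  rw [pow_add, pow_mul, hb15, one_pow, one_mul]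

def φ15 : Multiplicative (ZMod 15) →* Rq where
  toFun z := β ^ (Multiplicative.toAdd z).val
  map_one' := by simp
  map_mul' a b := by
    simp only [toAdd_mul]
    rw [← pow_add, ← hpow_mod ((Multiplicative.toAdd a).val + (Multiplicative.toAdd b).val),
      ← ZMod.val_add]

abbrev Gg := Multiplicative (ZMod 3) × Multiplicative (ZMod 15)

def Φ : Gg →* Rq := φ15.comp (MonoidHom.snd _ _)

def χ : MonoidAlgebra (ZMod 2) Gg →ₐ[ZMod 2] Rq := MonoidAlgebra.lift (ZMod 2) Rq Gg Φ

def ψ : MonoidAlgebra (ZMod 2) Gg →ₐ[ZMod 2] Rq :=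
  MonoidAlgebra.lift (ZMod 2) Rq Gg (Φ.comp invMonoidHom)

lemma star_eval (x : MonoidAlgebra (ZMod 2) Gg) :
    χ (MonoidAlgebra.ofCoeff (Finsupp.mapDomain (fun g : Gg => g⁻¹) x.coeff)) = ψ x := by
  rw [χ, ψ, MonoidAlgebra.lift_apply, MonoidAlgebra.lift_apply, MonoidAlgebra.coeff_ofCoeff]
  rw [Finsupp.sum_mapDomain_index (fun g => by simp) (fun g m₁ m₂ => by rw [add_smul])]
  rfl

def elt (j : ZMod 15) : MonoidAlgebra (ZMod 2) Gg :=
  MonoidAlgebra.single ((1 : Multiplicative (ZMod 3)), Multiplicative.ofAdd j) 1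

def aa : MonoidAlgebra (ZMod 2) Gg := elt 3 + elt 10 + elt 12

lemma χ_elt (j : ZMod 15) : χ (elt j) = β ^ j.val := by
  rw [elt, χ, MonoidAlgebra.lift_single, one_smul]
  rfl

lemma ψ_elt (j : ZMod 15) : ψ (elt j) = β ^ (-j).val := by
  rw [elt, ψ, MonoidAlgebra.lift_single, one_smul]
  rfl

lemma χ_aa : χ aa = 0 := by
  rw [aa, map_add, map_add, χ_elt, χ_elt, χ_elt,
    show ((3:ZMod 15)).val = 3 by decide, show ((10:ZMod 15)).val = 10 by decide,
    show ((12:ZMod 15)).val = 12 by decide]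
  linear_combination (β^8+β^6+β^5+β^4+β^3) * h0 - (β^9+β^8+β^7+β^6+β^5+β^4) * h2

lemma ψ_aa : ψ aa = 1 := by
  rw [aa, map_add, map_add, ψ_elt, ψ_elt, ψ_elt,
    show ((-(3:ZMod 15))).val = 12 by decide, show ((-(10:ZMod 15))).val = 5 by decide,
    show ((-(12:ZMod 15))).val = 3 by decide]
  linear_combination (β^8+β^5+β^4+β^2+β+1) * h0 - (β^9+β^8+β^6+β^5+β^4+β^2+β+1) * h2

end

/-- There is no positive `t` with `2^t ≡ −1 (mod 15)`; consequently, with the classical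
involution, `F₂(C₃ × C₁₅)` is not `*`-clean. -/
theorem F2_C3C15_not_star_clean :
    (¬ ∃ t : ℕ, 0 < t ∧ (2 : ZMod 15) ^ t = -1) ∧
    ¬ (∀ a : MonoidAlgebra (ZMod 2) (Multiplicative (ZMod 3) × Multiplicative (ZMod 15)),
      ∃ u e : MonoidAlgebra (ZMod 2) (Multiplicative (ZMod 3) × Multiplicative (ZMod 15)),
        IsUnit u ∧ IsIdempotentElem e ∧
        Finsupp.mapDomain
          (fun g : Multiplicative (ZMod 3) × Multiplicative (ZMod 15) => g⁻¹) e.coeff = e.coeff ∧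
        a = u + e) := by
  constructor
  · rintro ⟨t, -, h⟩
    have h4 : (2 : ZMod 15) ^ 4 = 1 := by decide
    have hmod : (2 : ZMod 15) ^ t = 2 ^ (t % 4) := by
      conv_lhs => rw [← Nat.div_add_mod t 4]
      rw [pow_add, pow_mul, h4, one_pow, one_mul]
    rw [hmod] at h
    have ht : t % 4 < 4 := Nat.mod_lt _ (by norm_num)
    interval_cases h : t % 4 <;> revert h <;> decide
  · intro H
    have := hRnt
    obtain ⟨u, e, hu, he, hstar, heq⟩ := H aa
    have hχu : IsUnit (χ u) := hu.map χ
    have hψu : IsUnit (ψ u) := hu.map ψ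
    have hχe : IsIdempotentElem (χ e) := by
      unfold IsIdempotentElem
      rw [← map_mul, he]
    have hse : χ e = ψ e := by rw [← star_eval, hstar]
    have h1 : χ u + χ e = 0 := by
      rw [← map_add, ← heq, χ_aa]
    have h2' : ψ u + ψ e = 1 := by
      rw [← map_add, ← heq, ψ_aa]
    -- χ u = -χ e, a unit, so χ e is a unit, and an idempotent unit is 1
    have hεu : IsUnit (χ e) := by
      have : χ u = -(χ e) := eq_neg_of_add_eq_zero_left h1
      rw [this] at hχu
      exact (IsUnit.neg_iff _).mp hχu
    have hε1 : χ e = 1 :=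
      hεu.mul_left_cancel (show χ e * χ e = χ e * 1 by rw [mul_one]; exact hχe)
    rw [← hse, hε1] at h2'
    have : ψ u = 0 := by rwa [add_eq_right] at h2' 
    rw [this] at hψu
    exact one_ne_zero ((isUnit_zero_iff.mp hψu).symm)
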